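/- Let G be a finite group, A a G-graded K-algebra, M a graded A-module admitting a resolution by finitely generated graded projective A-modules, and N a graded A-module. Then for each i ≥ 0 there is a K-vector space isomorphism Ext^i_A(M, N) ⊗_K (KG)^* ≅ Ext^i_{A#G^*}(M ⊗_K (KG)^*, N ⊗_K (KG)^*). -/

import Mathlib

open CategoryTheory DirectSum

universe u

/-- `B` is a smash product `A # G^*` of the `G`-graded `K`-algebra `A` (with grading `𝒜`)
with the dual of the group algebra of the finite group `G` : `B` contains `A`, and a
complete family of orthogonal idempotents `u g` (the images of the dual basis `p_g`)
satisfying the smash commutation rule `(1 # p_g)(a # p_h) = a_{gh⁻¹} # p_h`, and `B` is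
free as an `A`-module with basis the `u g`. -/
structure IsSmashProduct (K : Type u) [Field K] (A : Type u) [Ring A] [Algebra K A]
    (G : Type u) [Group G] [Fintype G] [DecidableEq G]
    (𝒜 : G → Submodule K A) [DirectSum.Decomposition 𝒜]
    (B : Type u) [Ring B] [Algebra K B] where
  ι : A →ₐ[K] B
  u : G → B
  idem : ∀ g : G, u g * u g = u g
  orth : ∀ g h : G, g ≠ h → u g * u h = 0
  sum_u : ∑ g : G, u g = 1
  comm : ∀ (g h : G) (a : A),
    u g * (ι a * u h) = ι ((DirectSum.decompose 𝒜 a (g * h⁻¹) : 𝒜 (g * h⁻¹)) : A) * u h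
  free : ∀ b : B, ∃! c : G → A, b = ∑ g : G, ι (c g) * u g

/- STATEMENT 16: For a G-graded K-algebra A, a graded A-module M admitting a resolution
by finitely generated graded projective A-modules, and a graded A-module N, for each
i ≥ 0 there is a K-linear isomorphism
Ext^i_A(M,N) ⊗_K (KG)^* ≅ Ext^i_{A#G^*}(M ⊗_K (KG)^*, N ⊗_K (KG)^*),
where (KG)^* is identified with the functions G → K. -/


set_option linter.unusedSectionVars false
set_option maxHeartbeats 1000000

open DirectSum

section
variable {K : Type u} [Field K] {G : Type u} [Group G] [Fintype G] [DecidableEq G]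
variable {V : Type u} [AddCommGroup V] [Module K V]

/-- The `g`-component of `v` w.r.t. the decomposition `𝒱`. -/
def dcp (𝒱 : G → Submodule K V) [Decomposition 𝒱] (v : V) (g : G) : V :=
  ((DirectSum.decompose 𝒱 v g : 𝒱 g) : V)

variable (𝒱 : G → Submodule K V) [Decomposition 𝒱]

lemma dcp_mem (v : V) (g : G) : dcp 𝒱 v g ∈ 𝒱 g := Subtype.coe_prop _

lemma dcp_of_mem_same {v : V} {g : G} (h : v ∈ 𝒱 g) : dcp 𝒱 v g = v :=
  DirectSum.decompose_of_mem_same 𝒱 h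

lemma dcp_of_mem_ne {v : V} {g g' : G} (h : v ∈ 𝒱 g) (hne : g ≠ g') : dcp 𝒱 v g' = 0 :=
  DirectSum.decompose_of_mem_ne 𝒱 h hne

lemma dcp_add (v w : V) (g : G) : dcp 𝒱 (v + w) g = dcp 𝒱 v g + dcp 𝒱 w g := by
  unfold dcp
  rw [DirectSum.decompose_add, DirectSum.add_apply, Submodule.coe_add]

/-- `dcp` as an additive monoid hom. -/
def dcpHom (g : G) : V →+ V := AddMonoidHom.mk' (fun v => dcp 𝒱 v g) (fun v w => dcp_add 𝒱 v w g)

lemma dcp_zero (g : G) : dcp 𝒱 0 g = 0 := (dcpHom 𝒱 g).map_zero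

lemma dcp_sum {ι : Type*} (s : Finset ι) (f : ι → V) (g : G) :
    dcp 𝒱 (∑ x ∈ s, f x) g = ∑ x ∈ s, dcp 𝒱 (f x) g := map_sum (dcpHom 𝒱 g) f s

lemma sum_dcp (v : V) : ∑ g : G, dcp 𝒱 v g = v := by
  classical
  conv_rhs => rw [← DirectSum.sum_support_decompose 𝒱 v]
  symm
  apply Finset.sum_subset (Finset.subset_univ _)
  intro g _ hg
  rw [DFinsupp.notMem_support_iff] at hg
  simp [dcp, hg]

lemma sum_dcp_mul_inv (v : V) (k : G) : ∑ h : G, dcp 𝒱 v (k * h⁻¹) = v := by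
  conv_rhs => rw [← sum_dcp 𝒱 v]
  apply Fintype.sum_equiv (Equiv.trans (Equiv.inv G) (Equiv.mulLeft k))
  intro h
  rfl

lemma sum_dcp_mul_inv' (v : V) (k : G) : ∑ h : G, dcp 𝒱 v (h * k⁻¹) = v := by
  conv_rhs => rw [← sum_dcp 𝒱 v]
  apply Fintype.sum_equiv (Equiv.mulRight k⁻¹)
  intro h
  rfl

lemma dcp_dcp (v : V) (g g' : G) :
    dcp 𝒱 (dcp 𝒱 v g) g' = if g = g' then dcp 𝒱 v g else 0 := by
  split_ifs with h
  · subst h; exact dcp_of_mem_same 𝒱 (dcp_mem 𝒱 v g)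
  · exact dcp_of_mem_ne 𝒱 (dcp_mem 𝒱 v g) h

end

section smash

open TensorProduct Opposite

variable {K A G : Type u} [Field K] [Ring A] [Algebra K A] [Group G] [Fintype G] [DecidableEq G]
variable (𝒜 : G → Submodule K A) [DirectSum.Decomposition 𝒜]

section graded

variable {V : Type u} [AddCommGroup V] [Module A V] [Module K V]
  (𝒱 : G → Submodule K V) [DirectSum.Decomposition 𝒱]

lemma dcp_smul_of_mem (hV : ∀ (g h : G) (a : A) (v : V), a ∈ 𝒜 g → v ∈ 𝒱 h → a • v ∈ 𝒱 (g * h)) (a : A) {z : V} {d : G} (hz : z ∈ 𝒱 d) (c : G) :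
    dcp 𝒱 (a • z) c = dcp 𝒜 a (c * d⁻¹) • z := by
  conv_lhs => rw [show a • z = (∑ e : G, dcp 𝒜 a e) • z by rw [sum_dcp]]
  rw [Finset.sum_smul, dcp_sum]
  rw [Finset.sum_eq_single (c * d⁻¹)]
  · apply dcp_of_mem_same
    have := hV _ _ _ _ (dcp_mem 𝒜 a (c * d⁻¹)) hz
    rwa [inv_mul_cancel_right] at this
  · intro e _ hne
    apply dcp_of_mem_ne 𝒱 (hV _ _ _ _ (dcp_mem 𝒜 a e) hz)
    intro h
    exact hne (by rw [← h, mul_inv_cancel_right])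
  · intro h; exact absurd (Finset.mem_univ _) h

end graded

lemma dcp_mul_of_mem (hmul : ∀ (g h : G) (a b : A), a ∈ 𝒜 g → b ∈ 𝒜 h → a * b ∈ 𝒜 (g * h)) (x : A) {z : A} {d : G} (hz : z ∈ 𝒜 d) (c : G) :
    dcp 𝒜 (x * z) c = dcp 𝒜 x (c * d⁻¹) * z := by
  have := dcp_smul_of_mem (A := A) (V := A) 𝒜 𝒜 (fun g h a v ha hv => by
    simpa [smul_eq_mul] using hmul g h a v ha hv) x hz c
  simpa [smul_eq_mul] using this

section coeff

variable {B : Type u} [Ring B] [Algebra K B] (HS : IsSmashProduct K A G 𝒜 B)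

/-- Coefficients of `b : B` in the basis `u g` over `A`. -/
noncomputable def scoeff (b : B) : G → A := (HS.free b).choose

lemma scoeff_spec (b : B) : b = ∑ g : G, HS.ι (scoeff 𝒜 HS b g) * HS.u g :=
  (HS.free b).choose_spec.1

lemma scoeff_unique {b : B} {c : G → A} (h : b = ∑ g : G, HS.ι (c g) * HS.u g) :
    scoeff 𝒜 HS b = c :=
  ((HS.free b).choose_spec.2 c h).symm

lemma scoeff_iota (a : A) : scoeff 𝒜 HS (HS.ι a) = fun _ => a :=
  scoeff_unique 𝒜 HS (by rw [← Finset.mul_sum, HS.sum_u, mul_one])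

lemma scoeff_one : scoeff 𝒜 HS 1 = fun _ => 1 := by
  have := scoeff_iota 𝒜 HS 1
  rwa [map_one] at this

lemma scoeff_zero : scoeff 𝒜 HS 0 = fun _ => 0 :=
  scoeff_unique 𝒜 HS (by simp)

lemma scoeff_add (b₁ b₂ : B) :
    scoeff 𝒜 HS (b₁ + b₂) = fun g => scoeff 𝒜 HS b₁ g + scoeff 𝒜 HS b₂ g := by
  apply scoeff_unique
  calc b₁ + b₂ = (∑ g : G, HS.ι (scoeff 𝒜 HS b₁ g) * HS.u g)
      + ∑ g : G, HS.ι (scoeff 𝒜 HS b₂ g) * HS.u g := by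
        rw [← scoeff_spec, ← scoeff_spec]
    _ = _ := by
        rw [← Finset.sum_add_distrib]
        exact Finset.sum_congr rfl (fun g _ => by rw [map_add, add_mul])

lemma scoeff_iota_mul_u (a : A) (g : G) :
    scoeff 𝒜 HS (HS.ι a * HS.u g) = Pi.single g a := by
  apply scoeff_unique
  rw [Finset.sum_eq_single g]
  · rw [Pi.single_eq_same]
  · intro h _ hne
    rw [Pi.single_eq_of_ne hne, map_zero, zero_mul]
  · intro h; exact absurd (Finset.mem_univ _) h

lemma scoeff_u (g : G) : scoeff 𝒜 HS (HS.u g) = Pi.single g 1 := by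
  have := scoeff_iota_mul_u 𝒜 HS 1 g
  rwa [map_one, one_mul] at this

lemma comm_dcp (g h : G) (a : A) :
    HS.u g * (HS.ι a * HS.u h) = HS.ι (dcp 𝒜 a (g * h⁻¹)) * HS.u h :=
  HS.comm g h a

lemma iota_mul_u_mul (x y : A) (h k : G) :
    (HS.ι x * HS.u h) * (HS.ι y * HS.u k) = HS.ι (x * dcp 𝒜 y (h * k⁻¹)) * HS.u k := by
  rw [mul_assoc (HS.ι x) (HS.u h), comm_dcp 𝒜 HS h k y, ← mul_assoc, ← map_mul]

lemma scoeff_mul (b₁ b₂ : B) :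
    scoeff 𝒜 HS (b₁ * b₂)
      = fun k => ∑ h : G, scoeff 𝒜 HS b₁ h * dcp 𝒜 (scoeff 𝒜 HS b₂ k) (h * k⁻¹) := by
  apply scoeff_unique
  calc b₁ * b₂ = (∑ h : G, HS.ι (scoeff 𝒜 HS b₁ h) * HS.u h)
      * ∑ k : G, HS.ι (scoeff 𝒜 HS b₂ k) * HS.u k := by rw [← scoeff_spec, ← scoeff_spec]
    _ = ∑ h : G, ∑ k : G,
        HS.ι (scoeff 𝒜 HS b₁ h * dcp 𝒜 (scoeff 𝒜 HS b₂ k) (h * k⁻¹)) * HS.u k := by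
        rw [Finset.sum_mul_sum]
        exact Finset.sum_congr rfl (fun h _ => Finset.sum_congr rfl
          (fun k _ => iota_mul_u_mul 𝒜 HS _ _ _ _))
    _ = _ := by
        rw [Finset.sum_comm]
        exact Finset.sum_congr rfl (fun k _ => by rw [map_sum, Finset.sum_mul])

lemma iota_u_swap {z : A} {d : G} (hz : z ∈ 𝒜 d) (h : G) :
    HS.ι z * HS.u h = HS.u (d * h) * HS.ι z := by
  have : HS.u (d * h) * HS.ι z = HS.u (d * h) * (HS.ι z * ∑ k : G, HS.u k) := by
    rw [HS.sum_u, mul_one]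
  rw [this, Finset.mul_sum, Finset.mul_sum]
  conv_lhs => rw [show HS.ι z * HS.u h
    = ∑ k : G, if k = h then HS.ι z * HS.u k else 0 by simp]
  apply Finset.sum_congr rfl
  intro k _
  rw [← mul_assoc, mul_assoc (HS.u (d*h))]
  rw [comm_dcp 𝒜 HS (d*h) k z]
  split_ifs with hk
  · subst hk
    rw [dcp_of_mem_same 𝒜 (by rwa [mul_inv_cancel_right])]
  · rw [dcp_of_mem_ne 𝒜 hz, map_zero, zero_mul]
    intro he
    apply hk
    have h2 : d * (h * k⁻¹) = d * 1 := by rw [mul_one, ← mul_assoc, ← he]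
    have h3 := mul_left_cancel h2
    rw [mul_inv_eq_one] at h3
    exact h3.symm

end coeff

section smashmod

variable {B : Type u} [Ring B] [Algebra K B] (HS : IsSmashProduct K A G 𝒜 B)
variable (hone : (1 : A) ∈ 𝒜 1)
variable (hmul : ∀ (g h : G) (a b : A), a ∈ 𝒜 g → b ∈ 𝒜 h → a * b ∈ 𝒜 (g * h))
variable {X Y Z : Type u} [AddCommGroup X] [Module A X] [AddCommGroup Y] [Module A Y]
  [AddCommGroup Z] [Module A Z]

/-- The action of `B = A # G^*` on `G → X ≃ B ⊗_A X`. -/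
noncomputable def smashSmul (b : B) (f : G → X) : G → X :=
  fun g => ∑ h : G, dcp 𝒜 (scoeff 𝒜 HS b h) (g * h⁻¹) • f h

lemma dcp_one_eq (hone : (1 : A) ∈ 𝒜 1) (c : G) : dcp 𝒜 (1 : A) c = if c = 1 then 1 else 0 := by
  split_ifs with h
  · subst h; exact dcp_of_mem_same 𝒜 hone
  · exact dcp_of_mem_ne 𝒜 hone (fun he => h he.symm)

/-- The `B`-module structure on `G → X ≃ B ⊗_A X` for an `A`-module `X`. -/
noncomputable def smashModule : Module B (G → X) where
  smul := smashSmul 𝒜 HS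
  one_smul f := by
    funext g
    show smashSmul 𝒜 HS 1 f g = f g
    unfold smashSmul
    rw [scoeff_one]
    rw [Finset.sum_eq_single g]
    · rw [show g * g⁻¹ = 1 by group, dcp_of_mem_same 𝒜 hone, one_smul]
    · intro h _ hne
      rw [dcp_of_mem_ne 𝒜 hone (fun he => hne (by
        have : g * h⁻¹ = 1 := he.symm
        rw [mul_inv_eq_one] at this
        exact this.symm)), zero_smul]
    · intro h; exact absurd (Finset.mem_univ _) h
  mul_smul b₁ b₂ f := by
    funext g
    show smashSmul 𝒜 HS (b₁ * b₂) f g = smashSmul 𝒜 HS b₁ (smashSmul 𝒜 HS b₂ f) g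
    unfold smashSmul
    rw [scoeff_mul]
    calc ∑ h : G, dcp 𝒜 (∑ k : G, scoeff 𝒜 HS b₁ k
          * dcp 𝒜 (scoeff 𝒜 HS b₂ h) (k * h⁻¹)) (g * h⁻¹) • f h
        = ∑ h : G, ∑ k : G, (dcp 𝒜 (scoeff 𝒜 HS b₁ k) (g * k⁻¹)
            * dcp 𝒜 (scoeff 𝒜 HS b₂ h) (k * h⁻¹)) • f h := by
          apply Finset.sum_congr rfl
          intro h _
          rw [dcp_sum, Finset.sum_smul]
          apply Finset.sum_congr rfl
          intro k _
          rw [dcp_mul_of_mem 𝒜 hmul _ (dcp_mem 𝒜 _ _),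
            show g * h⁻¹ * (k * h⁻¹)⁻¹ = g * k⁻¹ by group]
      _ = ∑ k : G, dcp 𝒜 (scoeff 𝒜 HS b₁ k) (g * k⁻¹)
            • ∑ h : G, dcp 𝒜 (scoeff 𝒜 HS b₂ h) (k * h⁻¹) • f h := by
          rw [Finset.sum_comm]
          exact Finset.sum_congr rfl (fun k _ => by
            rw [Finset.smul_sum]
            exact Finset.sum_congr rfl (fun h _ => by rw [mul_smul]))
  smul_zero b := by
    funext g
    show smashSmul 𝒜 HS b 0 g = 0
    simp [smashSmul]
  smul_add b f₁ f₂ := by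
    funext g
    show smashSmul 𝒜 HS b (f₁ + f₂) g = smashSmul 𝒜 HS b f₁ g + smashSmul 𝒜 HS b f₂ g
    simp [smashSmul, smul_add, Finset.sum_add_distrib]
  add_smul b₁ b₂ f := by
    funext g
    show smashSmul 𝒜 HS (b₁ + b₂) f g = smashSmul 𝒜 HS b₁ f g + smashSmul 𝒜 HS b₂ f g
    unfold smashSmul
    rw [scoeff_add]
    simp [dcp_add, add_smul, Finset.sum_add_distrib]
  zero_smul f := by
    funext g
    show smashSmul 𝒜 HS 0 f g = 0
    unfold smashSmul
    rw [scoeff_zero]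
    simp [dcp_zero]

lemma smashSmul_iota_u (a : A) (g : G) (f : G → X) :
    smashSmul 𝒜 HS (HS.ι a * HS.u g) f = fun k => dcp 𝒜 a (k * g⁻¹) • f g := by
  funext k
  unfold smashSmul
  rw [scoeff_iota_mul_u]
  rw [Finset.sum_eq_single g]
  · rw [Pi.single_eq_same]
  · intro h _ hne
    rw [Pi.single_eq_of_ne hne, dcp_zero, zero_smul]
  · intro h; exact absurd (Finset.mem_univ _) h

lemma smashSmul_iota (a : A) (f : G → X) :
    smashSmul 𝒜 HS (HS.ι a) f = fun k => ∑ h : G, dcp 𝒜 a (k * h⁻¹) • f h := by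
  funext k
  unfold smashSmul
  rw [scoeff_iota]

lemma smashSmul_iota_const (a : A) (x : X) :
    smashSmul 𝒜 HS (HS.ι a) (fun _ => x) = fun _ => a • x := by
  rw [smashSmul_iota]
  funext k
  rw [← Finset.sum_smul, sum_dcp_mul_inv]

lemma smashSmul_u (hone : (1 : A) ∈ 𝒜 1) (g : G) (f : G → X) :
    smashSmul 𝒜 HS (HS.u g) f = Pi.single g (f g) := by
  funext k
  have : HS.u g = HS.ι 1 * HS.u g := by rw [map_one, one_mul]
  rw [this]
  have h2 := congrFun (smashSmul_iota_u 𝒜 HS (1 : A) g f) k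
  rw [h2, dcp_one_eq 𝒜 hone]
  by_cases hk : k = g
  · subst hk
    rw [if_pos (by group), one_smul, Pi.single_eq_same]
  · rw [if_neg (by
      intro h
      rw [mul_inv_eq_one] at h
      exact hk h), zero_smul, Pi.single_eq_of_ne hk]

lemma smashSmul_algebraMap (hone : (1 : A) ∈ 𝒜 1) (c : K) (f : G → X) :
    smashSmul 𝒜 HS (algebraMap K B c) f = fun g => algebraMap K A c • f g := by
  have h1 : (algebraMap K B c) = HS.ι (algebraMap K A c) := (HS.ι.commutes c).symm
  rw [h1, smashSmul_iota]
  funext k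
  have hmem : algebraMap K A c ∈ 𝒜 1 := by
    rw [Algebra.algebraMap_eq_smul_one]
    exact Submodule.smul_mem _ _ hone
  rw [Finset.sum_eq_single k]
  · rw [show k * k⁻¹ = 1 by group, dcp_of_mem_same 𝒜 hmem]
  · intro h _ hne
    rw [dcp_of_mem_ne 𝒜 hmem (fun he => hne (by
      have : k * h⁻¹ = 1 := he.symm
      rw [mul_inv_eq_one] at this
      exact this.symm)), zero_smul]
  · intro h; exact absurd (Finset.mem_univ _) h

lemma smashSmul_comp (φ : X →ₗ[A] Y) (b : B) (f : G → X) :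
    (fun g => φ (smashSmul 𝒜 HS b f g)) = smashSmul 𝒜 HS b (fun g => φ (f g)) := by
  funext g
  unfold smashSmul
  rw [map_sum]
  exact Finset.sum_congr rfl (fun h _ => by rw [map_smul])

end smashmod

section functorial

open CategoryTheory

variable {B : Type u} [Ring B] [Algebra K B] (HS : IsSmashProduct K A G 𝒜 B)
variable (hone : (1 : A) ∈ 𝒜 1)
variable (hmul : ∀ (g h : G) (a b : A), a ∈ 𝒜 g → b ∈ 𝒜 h → a * b ∈ 𝒜 (g * h))

lemma mul_u_eq (b : B) (h : G) : b * HS.u h = HS.ι (scoeff 𝒜 HS b h) * HS.u h := by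
  conv_lhs => rw [scoeff_spec 𝒜 HS b]
  rw [Finset.sum_mul]
  rw [Finset.sum_eq_single h]
  · rw [mul_assoc, HS.idem]
  · intro g _ hne
    rw [mul_assoc, HS.orth g h hne, mul_zero]
  · intro hh; exact absurd (Finset.mem_univ _) hh

/-- Induction to `B` of an `A`-module, on objects. -/
noncomputable abbrev FOb (X : ModuleCat.{u} A) : ModuleCat.{u} B :=
  letI : Module B (G → X) := smashModule 𝒜 HS hone hmul
  ModuleCat.of B (G → X)

/-- Induction to `B` of an `A`-module, on morphisms. -/
noncomputable def FMap {X Y : ModuleCat.{u} A} (φ : X ⟶ Y) :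
    FOb 𝒜 HS hone hmul X ⟶ FOb 𝒜 HS hone hmul Y :=
  letI : Module B (G → X) := smashModule 𝒜 HS hone hmul
  letI : Module B (G → Y) := smashModule 𝒜 HS hone hmul
  ModuleCat.ofHom <|
  { toFun := fun f => fun g => φ (f g)
    map_add' := fun f₁ f₂ => by funext g; exact map_add φ.hom _ _
    map_smul' := fun b f => by
      show (fun g => φ (smashSmul 𝒜 HS b f g)) = smashSmul 𝒜 HS b (fun g => φ (f g))
      exact smashSmul_comp 𝒜 HS φ.hom b f }

lemma FMap_id (X : ModuleCat.{u} A) :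
    FMap 𝒜 HS hone hmul (𝟙 X) = 𝟙 (FOb 𝒜 HS hone hmul X) := rfl

lemma FMap_comp {X Y Z : ModuleCat.{u} A} (φ : X ⟶ Y) (ψ : Y ⟶ Z) :
    FMap 𝒜 HS hone hmul (φ ≫ ψ) = FMap 𝒜 HS hone hmul φ ≫ FMap 𝒜 HS hone hmul ψ := rfl

lemma FMap_zero {X Y : ModuleCat.{u} A} :
    FMap 𝒜 HS hone hmul (0 : X ⟶ Y) = 0 := by
  refine ModuleCat.hom_ext (DFunLike.ext _ _ fun f => ?_)
  funext g
  rfl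

/-- The `A`-module structure on a `B`-module via `HS.ι`. -/
def resModule (Yc : ModuleCat.{u} B) : Module A Yc :=
  Module.compHom Yc HS.ι.toRingHom

/-- Restriction to `A` of a `B`-module. -/
noncomputable abbrev ROb (Yc : ModuleCat.{u} B) : ModuleCat.{u} A :=
  letI : Module A Yc := resModule 𝒜 HS Yc
  ModuleCat.of A Yc

variable {Yc : ModuleCat.{u} B} {X : ModuleCat.{u} A}

/-- Forward map of the induction-restriction adjunction. -/
noncomputable def adjFun (φ : FOb 𝒜 HS hone hmul X ⟶ Yc) : X ⟶ ROb 𝒜 HS Yc :=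
  letI : Module B (G → X) := smashModule 𝒜 HS hone hmul
  letI : Module A Yc := resModule 𝒜 HS Yc
  ModuleCat.ofHom <|
  { toFun := fun x => φ (fun _ => x)
    map_add' := fun x y => by
      show φ (fun _ => x + y) = φ (fun _ => x) + φ (fun _ => y)
      rw [show (fun _ => x + y : G → X) = (fun _ => x) + (fun _ => y) from rfl, map_add]
    map_smul' := fun a x => by
      show φ (fun _ => a • x) = a • φ (fun _ => x)
      rw [show (fun _ => a • x : G → X) = smashSmul 𝒜 HS (HS.ι a) (fun _ => x) from
        (smashSmul_iota_const 𝒜 HS a x).symm]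
      exact φ.hom.map_smul (HS.ι a) (fun _ => x) }

/-- Backward map of the induction-restriction adjunction. -/
noncomputable def adjInv (ψ : X ⟶ ROb 𝒜 HS Yc) : FOb 𝒜 HS hone hmul X ⟶ Yc :=
  letI : Module B (G → X) := smashModule 𝒜 HS hone hmul
  letI : Module A Yc := resModule 𝒜 HS Yc
  letI : Module B (ROb 𝒜 HS Yc) := Yc.isModule
  ModuleCat.ofHom <|
  { toFun := fun f => ∑ g : G, HS.u g • (ψ (f g) : Yc)
    map_add' := fun f₁ f₂ => by
      show ∑ g : G, HS.u g • (ψ ((f₁ + f₂) g) : Yc)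
        = (∑ g : G, HS.u g • (ψ (f₁ g) : Yc)) + ∑ g : G, HS.u g • (ψ (f₂ g) : Yc)
      rw [← Finset.sum_add_distrib]
      apply Finset.sum_congr rfl
      intro g _
      rw [show (f₁ + f₂) g = f₁ g + f₂ g from rfl]
      rw [show (ψ (f₁ g + f₂ g) : Yc) = ψ (f₁ g) + ψ (f₂ g) from map_add ψ.hom _ _, smul_add]
    map_smul' := fun b f => by
      show ∑ g : G, HS.u g • (ψ (smashSmul 𝒜 HS b f g) : Yc)
        = b • ∑ g : G, HS.u g • (ψ (f g) : Yc)
      calc ∑ g : G, HS.u g • (ψ (smashSmul 𝒜 HS b f g) : Yc)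
          = ∑ g : G, ∑ h : G,
            ((HS.ι (dcp 𝒜 (scoeff 𝒜 HS b h) (g * h⁻¹)) * HS.u h) • (ψ (f h) : Yc)) := by
            apply Finset.sum_congr rfl
            intro g _
            unfold smashSmul
            rw [show (ψ (∑ h : G, dcp 𝒜 (scoeff 𝒜 HS b h) (g * h⁻¹) • f h) : Yc)
              = ∑ h : G, (ψ (dcp 𝒜 (scoeff 𝒜 HS b h) (g * h⁻¹) • f h) : Yc) from
                map_sum ψ.hom _ _, Finset.smul_sum]
            apply Finset.sum_congr rfl
            intro h _
            have h5 : (ψ (dcp 𝒜 (scoeff 𝒜 HS b h) (g * h⁻¹) • f h) : Yc)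
                = HS.ι (dcp 𝒜 (scoeff 𝒜 HS b h) (g * h⁻¹)) • (ψ (f h) : Yc) :=
              ψ.hom.map_smul _ (f h)
            rw [h5, smul_smul]
            congr 1
            have h6 := iota_u_swap 𝒜 HS (dcp_mem 𝒜 (scoeff 𝒜 HS b h) (g * h⁻¹)) h
            rw [show g * h⁻¹ * h = g by group] at h6
            exact h6.symm
      _ = ∑ h : G, (HS.ι (scoeff 𝒜 HS b h) * HS.u h) • (ψ (f h) : Yc) := by
            rw [Finset.sum_comm]
            apply Finset.sum_congr rfl
            intro h _
            rw [← Finset.sum_smul]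
            congr 1
            rw [← Finset.sum_mul, ← map_sum, sum_dcp_mul_inv']
      _ = b • ∑ g : G, HS.u g • (ψ (f g) : Yc) := by
            rw [Finset.smul_sum]
            apply Finset.sum_congr rfl
            intro h _
            rw [smul_smul, mul_u_eq 𝒜 HS b h] }

lemma adjFun_adjInv (ψ : X ⟶ ROb 𝒜 HS Yc) :
    adjFun 𝒜 HS hone hmul (adjInv 𝒜 HS hone hmul ψ) = ψ := by
  letI : Module B (ROb 𝒜 HS Yc) := Yc.isModule
  refine ModuleCat.hom_ext (DFunLike.ext _ _ fun x => ?_)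
  show ∑ g : G, HS.u g • (ψ x : Yc) = ψ x
  rw [← Finset.sum_smul, HS.sum_u, one_smul]

lemma adjInv_adjFun (φ : FOb 𝒜 HS hone hmul X ⟶ Yc) :
    adjInv 𝒜 HS hone hmul (adjFun 𝒜 HS hone hmul φ) = φ := by
  letI : Module B (G → X) := smashModule 𝒜 HS hone hmul
  refine ModuleCat.hom_ext (DFunLike.ext _ _ fun f => ?_)
  show ∑ g : G, HS.u g • φ (fun _ => f g) = φ f
  calc ∑ g : G, HS.u g • φ (fun _ => f g)
      = ∑ g : G, φ (smashSmul 𝒜 HS (HS.u g) (fun _ => f g)) := by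
        exact Finset.sum_congr rfl (fun g _ => (φ.hom.map_smul (HS.u g) _).symm)
    _ = ∑ g : G, φ (Pi.single g (f g)) := by
        exact Finset.sum_congr rfl (fun g _ => by rw [smashSmul_u 𝒜 HS hone g])
    _ = φ f := by
        rw [← map_sum φ.hom, Finset.univ_sum_single]

lemma adjFun_natural {X' : ModuleCat.{u} A} (ξ : X' ⟶ X) (φ : FOb 𝒜 HS hone hmul X ⟶ Yc) :
    adjFun 𝒜 HS hone hmul (FMap 𝒜 HS hone hmul ξ ≫ φ) = ξ ≫ adjFun 𝒜 HS hone hmul φ := rfl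

/-- Induction preserves projectivity. -/
lemma FOb_projective (X : ModuleCat.{u} A) [CategoryTheory.Projective X] :
    CategoryTheory.Projective (FOb 𝒜 HS hone hmul X) := by
  constructor
  intro E Z f e he
  letI : Module A E := resModule 𝒜 HS E
  letI : Module A Z := resModule 𝒜 HS Z
  have hesurj : Function.Surjective e := (ModuleCat.epi_iff_surjective e).1 he
  let eA : ROb 𝒜 HS E ⟶ ROb 𝒜 HS Z :=
    ModuleCat.ofHom <|
    { toFun := e
      map_add' := map_add e.hom
      map_smul' := fun a x => e.hom.map_smul (HS.ι a) x }
  haveI : Epi eA := (ModuleCat.epi_iff_surjective eA).2 hesurj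
  obtain ⟨l, hl⟩ := CategoryTheory.Projective.factors (adjFun 𝒜 HS hone hmul f) eA
  refine ⟨adjInv 𝒜 HS hone hmul l, ?_⟩
  have h2 : adjFun 𝒜 HS hone hmul (adjInv 𝒜 HS hone hmul l ≫ e)
      = adjFun 𝒜 HS hone hmul f := by
    have h3 : adjFun 𝒜 HS hone hmul (adjInv 𝒜 HS hone hmul l ≫ e)
        = adjFun 𝒜 HS hone hmul (adjInv 𝒜 HS hone hmul l) ≫ eA := rfl
    rw [h3, adjFun_adjInv, hl]
  have h4 := congrArg (adjInv 𝒜 HS hone hmul) h2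
  rwa [adjInv_adjFun, adjInv_adjFun] at h4

end functorial

section cplx

open CategoryTheory

variable {B : Type u} [Ring B] [Algebra K B] (HS : IsSmashProduct K A G 𝒜 B)
variable (hone : (1 : A) ∈ 𝒜 1)
variable (hmul : ∀ (g h : G) (a b : A), a ∈ 𝒜 g → b ∈ 𝒜 h → a * b ∈ 𝒜 (g * h))

/-- Induction applied to a chain complex. -/
noncomputable def FCplx (Pc : ChainComplex (ModuleCat.{u} A) ℕ) :
    ChainComplex (ModuleCat.{u} B) ℕ where
  X n := FOb 𝒜 HS hone hmul (Pc.X n)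
  d i j := FMap 𝒜 HS hone hmul (Pc.d i j)
  shape i j hij := by
    show FMap 𝒜 HS hone hmul (Pc.d i j) = 0
    rw [Pc.shape i j hij, FMap_zero]
  d_comp_d' i j k _ _ := by
    show FMap 𝒜 HS hone hmul (Pc.d i j) ≫ FMap 𝒜 HS hone hmul (Pc.d j k) = 0
    rw [← FMap_comp, Pc.d_comp_d, FMap_zero]

end cplx

section tensorequiv

open TensorProduct

variable {B : Type u} [Ring B] [Algebra K B] (HS : IsSmashProduct K A G 𝒜 B)
variable (hone : (1 : A) ∈ 𝒜 1)
variable (hmul : ∀ (g h : G) (a b : A), a ∈ 𝒜 g → b ∈ 𝒜 h → a * b ∈ 𝒜 (g * h))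
variable {V : Type u} [AddCommGroup V] [Module A V] [Module K V]
variable (𝒱 : G → Submodule K V) [DirectSum.Decomposition 𝒱]
variable (hV : ∀ (g h : G) (a : A) (v : V), a ∈ 𝒜 g → v ∈ 𝒱 h → a • v ∈ 𝒱 (g * h))
variable [Module B (V ⊗[K] (G → K))]
variable (hVB : ∀ (a : A) (g : G) (v : V) (h : G),
    (HS.ι a * HS.u g) • (v ⊗ₜ[K] (Pi.single h (1 : K) : G → K)) =
      (a • ((DirectSum.decompose 𝒱 v (g * h⁻¹) : 𝒱 (g * h⁻¹)) : V)) ⊗ₜ[K]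
        (Pi.single h (1 : K) : G → K))

include hV in
lemma dcp_smul_homog {a' : A} {e : G} (ha' : a' ∈ 𝒜 e) (v : V) (c : G) :
    dcp 𝒱 (a' • v) c = a' • dcp 𝒱 v (e⁻¹ * c) := by
  conv_lhs => rw [show a' • v = a' • ∑ d : G, dcp 𝒱 v d by rw [sum_dcp]]
  rw [Finset.smul_sum, dcp_sum]
  rw [Finset.sum_eq_single (e⁻¹ * c)]
  · apply dcp_of_mem_same
    have := hV _ _ _ _ ha' (dcp_mem 𝒱 v (e⁻¹ * c))
    rwa [show e * (e⁻¹ * c) = c by group] at this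
  · intro d _ hne
    apply dcp_of_mem_ne 𝒱 (hV _ _ _ _ ha' (dcp_mem 𝒱 v d))
    intro he
    exact hne (((inv_mul_cancel_left e d).symm).trans (by rw [he]))
  · intro h; exact absurd (Finset.mem_univ _) h

/-- Shorthand for `piScalarRight`. -/
noncomputable abbrev psr : (V ⊗[K] (G → K)) ≃ₗ[K] (G → V) :=
  TensorProduct.piScalarRight K K V G

lemma psr_tmul_single (x : V) (h : G) :
    psr (V := V) (G := G) (x ⊗ₜ[K] (Pi.single h (1 : K) : G → K)) = Pi.single h x := by
  ext j
  simp [Pi.single_apply, ite_smul]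

lemma psr_symm_eq (w : G → V) :
    (psr (V := V) (G := G)).symm w = ∑ h : G, (w h) ⊗ₜ[K] (Pi.single h (1 : K) : G → K) := by
  conv_lhs => rw [← Finset.univ_sum_single w]
  rw [map_sum]
  apply Finset.sum_congr rfl
  intro h _
  rw [TensorProduct.piScalarRight_symm_single]

lemma tmul_eq_sum_single (v : V) (f : G → K) :
    v ⊗ₜ[K] f = ∑ h : G, (f h • v) ⊗ₜ[K] (Pi.single h (1 : K) : G → K) := by
  conv_lhs => rw [← Finset.univ_sum_single f]
  rw [tmul_sum]
  apply Finset.sum_congr rfl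
  intro h _
  rw [show (Pi.single h (f h) : G → K) = f h • (Pi.single h (1 : K) : G → K) by
    rw [← Pi.single_smul, smul_eq_mul, mul_one], tmul_smul, smul_tmul']

include hVB in
lemma hVB_dcp (a : A) (g : G) (v : V) (h : G) :
    (HS.ι a * HS.u g) • (v ⊗ₜ[K] (Pi.single h (1 : K) : G → K)) =
      (a • dcp 𝒱 v (g * h⁻¹)) ⊗ₜ[K] (Pi.single h (1 : K) : G → K) := hVB a g v h

lemma iota_eq_sum_mul_u (a : A) : HS.ι a = ∑ g : G, HS.ι a * HS.u g := by
  rw [← Finset.mul_sum, HS.sum_u, mul_one]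

include hVB in
lemma iota_smul_single (a : A) (v : V) (h : G) :
    HS.ι a • (v ⊗ₜ[K] (Pi.single h (1 : K) : G → K)) =
      (a • v) ⊗ₜ[K] (Pi.single h (1 : K) : G → K) := by
  conv_lhs => rw [iota_eq_sum_mul_u 𝒜 HS a]
  rw [Finset.sum_smul]
  calc ∑ g : G, (HS.ι a * HS.u g) • (v ⊗ₜ[K] (Pi.single h (1 : K) : G → K))
      = ∑ g : G, (a • dcp 𝒱 v (g * h⁻¹)) ⊗ₜ[K] (Pi.single h (1 : K) : G → K) :=
        Finset.sum_congr rfl (fun g _ => hVB_dcp 𝒜 HS 𝒱 hVB a g v h)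
    _ = _ := by
        rw [← sum_tmul, ← Finset.smul_sum, sum_dcp_mul_inv']

/-- The `A`-linear identification of the restriction of `V ⊗ (KG)^*` with `G → V`. -/
noncomputable def resTensorEquiv :
    letI : Module A (V ⊗[K] (G → K)) := Module.compHom _ HS.ι.toRingHom
    (V ⊗[K] (G → K)) ≃ₗ[A] (G → V) :=
  letI : Module A (V ⊗[K] (G → K)) := Module.compHom _ HS.ι.toRingHom
  { toFun := psr (V := V) (G := G)
    invFun := (psr (V := V) (G := G)).symm
    left_inv := (psr (V := V) (G := G)).left_inv
    right_inv := (psr (V := V) (G := G)).right_inv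
    map_add' := map_add _
    map_smul' := fun a y => by
      show psr (V := V) (G := G) (HS.ι a • y) = a • psr (V := V) (G := G) y
      induction y using TensorProduct.induction_on with
      | zero => simp
      | add y₁ y₂ h₁ h₂ => rw [smul_add, map_add, map_add, smul_add, h₁, h₂]
      | tmul v f =>
          rw [tmul_eq_sum_single v f, Finset.smul_sum, map_sum, map_sum, Finset.smul_sum]
          apply Finset.sum_congr rfl
          intro h _
          rw [iota_smul_single 𝒜 HS 𝒱 hVB, psr_tmul_single, psr_tmul_single]
          funext j
          rw [Pi.smul_apply, Pi.single_apply, Pi.single_apply]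
          split_ifs
          · rfl
          · rw [smul_zero] }

/-- `Φ` as a raw additive map. -/
noncomputable def phiAdd : (G → V) →+ (V ⊗[K] (G → K)) :=
  AddMonoidHom.mk' (fun f => ∑ h : G,
      (∑ g : G, dcp 𝒱 (f g) (g * h⁻¹)) ⊗ₜ[K] (Pi.single h (1 : K) : G → K))
    (fun f₁ f₂ => by
      rw [← Finset.sum_add_distrib]
      apply Finset.sum_congr rfl
      intro h _
      rw [← add_tmul, ← Finset.sum_add_distrib]
      congr 1
      exact Finset.sum_congr rfl (fun g _ => by
        rw [show (f₁ + f₂) g = f₁ g + f₂ g from rfl, dcp_add]))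

include hV hVB in
lemma phiAdd_gen (a : A) (g₀ : G) (f : G → V) :
    phiAdd 𝒱 (smashSmul 𝒜 HS (HS.ι a * HS.u g₀) f)
      = (HS.ι a * HS.u g₀) • phiAdd 𝒱 f := by
  unfold phiAdd
  simp only [AddMonoidHom.mk'_apply]
  rw [Finset.smul_sum]
  apply Finset.sum_congr rfl
  intro h _
  rw [hVB_dcp 𝒜 HS 𝒱 hVB]
  have h1 : ∀ g : G, dcp 𝒱 (smashSmul 𝒜 HS (HS.ι a * HS.u g₀) f g) (g * h⁻¹)
      = dcp 𝒜 a (g * g₀⁻¹) • dcp 𝒱 (f g₀) (g₀ * h⁻¹) := by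
    intro g
    rw [show smashSmul 𝒜 HS (HS.ι a * HS.u g₀) f g = dcp 𝒜 a (g * g₀⁻¹) • f g₀ from
      congrFun (smashSmul_iota_u 𝒜 HS a g₀ f) g]
    rw [dcp_smul_homog 𝒜 𝒱 hV (dcp_mem 𝒜 a (g * g₀⁻¹)) (f g₀),
      show (g * g₀⁻¹)⁻¹ * (g * h⁻¹) = g₀ * h⁻¹ by group]
  rw [Finset.sum_congr rfl (fun g _ => h1 g), ← Finset.sum_smul, sum_dcp_mul_inv']
  congr 1
  have h2 : dcp 𝒱 (∑ g : G, dcp 𝒱 (f g) (g * h⁻¹)) (g₀ * h⁻¹)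
      = dcp 𝒱 (f g₀) (g₀ * h⁻¹) := by
    rw [dcp_sum]
    rw [Finset.sum_eq_single g₀]
    · rw [dcp_dcp, if_pos rfl]
    · intro g _ hne
      rw [dcp_dcp, if_neg (fun he => hne (mul_right_cancel he))]
    · intro hh; exact absurd (Finset.mem_univ _) hh
  rw [h2]

/-- The `B`-linear identification of `B ⊗_A V = (G → V)` with `V ⊗ (KG)^*`. -/
noncomputable def smashTensorEquiv :
    letI : Module B (G → V) := smashModule 𝒜 HS hone hmul
    (G → V) ≃ₗ[B] (V ⊗[K] (G → K)) :=
  letI : Module B (G → V) := smashModule 𝒜 HS hone hmul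
  { toFun := phiAdd 𝒱
    map_add' := map_add _
    map_smul' := fun b f => by
      show phiAdd 𝒱 (smashSmul 𝒜 HS b f) = b • phiAdd 𝒱 f
      have hb : b = ∑ g : G, HS.ι (scoeff 𝒜 HS b g) * HS.u g := scoeff_spec 𝒜 HS b
      conv_lhs => rw [hb]
      conv_rhs => rw [hb]
      have h3 : smashSmul 𝒜 HS (∑ g : G, HS.ι (scoeff 𝒜 HS b g) * HS.u g) f
          = ∑ g : G, smashSmul 𝒜 HS (HS.ι (scoeff 𝒜 HS b g) * HS.u g) f := by
        show (∑ g : G, HS.ι (scoeff 𝒜 HS b g) * HS.u g) • f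
          = ∑ g : G, (HS.ι (scoeff 𝒜 HS b g) * HS.u g) • f
        rw [Finset.sum_smul]
      rw [h3, map_sum, Finset.sum_smul]
      exact Finset.sum_congr rfl (fun g _ => phiAdd_gen 𝒜 HS 𝒱 hV hVB _ g f)
    invFun := fun y => fun g => ∑ h : G, dcp 𝒱 (psr (V := V) (G := G) y h) (g * h⁻¹)
    left_inv := fun f => by
      funext g
      show ∑ h : G, dcp 𝒱 (psr (V := V) (G := G) (phiAdd 𝒱 f) h) (g * h⁻¹) = f g
      have h4 : psr (V := V) (G := G) (phiAdd 𝒱 f)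
          = fun h => ∑ g' : G, dcp 𝒱 (f g') (g' * h⁻¹) := by
        unfold phiAdd
        simp only [AddMonoidHom.mk'_apply]
        rw [map_sum]
        rw [Finset.sum_congr rfl (fun h _ => psr_tmul_single _ h)]
        rw [Finset.univ_sum_single (fun h => ∑ g' : G, dcp 𝒱 (f g') (g' * h⁻¹))]
      simp only [h4]
      calc ∑ h : G, dcp 𝒱 (∑ g' : G, dcp 𝒱 (f g') (g' * h⁻¹)) (g * h⁻¹)
          = ∑ h : G, dcp 𝒱 (f g) (g * h⁻¹) := by
            apply Finset.sum_congr rfl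
            intro h _
            rw [dcp_sum]
            rw [Finset.sum_eq_single g]
            · rw [dcp_dcp, if_pos rfl]
            · intro g' _ hne
              rw [dcp_dcp, if_neg (fun he => hne (mul_right_cancel he))]
            · intro hh; exact absurd (Finset.mem_univ _) hh
        _ = f g := sum_dcp_mul_inv 𝒱 (f g) g
    right_inv := fun y => by
      show phiAdd 𝒱 _ = y
      unfold phiAdd
      simp only [AddMonoidHom.mk'_apply]
      have h5 : ∀ h : G, (∑ g : G, dcp 𝒱
            (∑ k : G, dcp 𝒱 (psr (V := V) (G := G) y k) (g * k⁻¹)) (g * h⁻¹))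
          = psr (V := V) (G := G) y h := by
        intro h
        calc ∑ g : G, dcp 𝒱 (∑ k : G, dcp 𝒱 (psr (V := V) (G := G) y k) (g * k⁻¹)) (g * h⁻¹)
            = ∑ g : G, dcp 𝒱 (psr (V := V) (G := G) y h) (g * h⁻¹) := by
              apply Finset.sum_congr rfl
              intro g _
              rw [dcp_sum]
              rw [Finset.sum_eq_single h]
              · rw [dcp_dcp, if_pos rfl]
              · intro k _ hne
                rw [dcp_dcp, if_neg (fun he => hne (inv_injective (mul_left_cancel he)))]
              · intro hh; exact absurd (Finset.mem_univ _) hh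
          _ = psr (V := V) (G := G) y h := sum_dcp_mul_inv' 𝒱 _ h
      rw [Finset.sum_congr rfl (fun h _ => by rw [h5 h])]
      rw [← psr_symm_eq]
      exact (psr (V := V) (G := G)).symm_apply_apply y }

open CategoryTheory in
/-- Component of the adjunction identification. -/
noncomputable def resToPi (X : ModuleCat.{u} A)
    (φ : FOb 𝒜 HS hone hmul X ⟶ ModuleCat.of B (V ⊗[K] (G → K))) :
    G → (X ⟶ ModuleCat.of A V) :=
  letI : Module A (V ⊗[K] (G → K)) := Module.compHom _ HS.ι.toRingHom
  letI : Module B (G → X) := smashModule 𝒜 HS hone hmul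
  fun g =>
  ModuleCat.ofHom <|
  { toFun := fun x => resTensorEquiv 𝒜 HS 𝒱 hVB (φ (fun _ => x)) g
    map_add' := fun x y => by
      show resTensorEquiv 𝒜 HS 𝒱 hVB (φ (fun _ => x + y)) g
        = resTensorEquiv 𝒜 HS 𝒱 hVB (φ (fun _ => x)) g
          + resTensorEquiv 𝒜 HS 𝒱 hVB (φ (fun _ => y)) g
      rw [show (fun _ => x + y : G → X) = (fun _ => x) + (fun _ => y) from rfl,
        map_add, map_add]
      rfl
    map_smul' := fun a x => by
      dsimp only [RingHom.id_apply]
      show resTensorEquiv 𝒜 HS 𝒱 hVB (φ (fun _ => a • x)) g = _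
      have h0 : (fun _ => a • x : G → X) = smashSmul 𝒜 HS (HS.ι a) (fun _ => x) :=
        (smashSmul_iota_const 𝒜 HS a x).symm
      rw [h0]
      have h1 : φ (smashSmul 𝒜 HS (HS.ι a) (fun _ => x)) = HS.ι a • φ (fun _ => x) :=
        φ.hom.map_smul _ _
      rw [h1]
      have h2 : resTensorEquiv 𝒜 HS 𝒱 hVB (HS.ι a • φ (fun _ => x))
          = a • resTensorEquiv 𝒜 HS 𝒱 hVB (φ (fun _ => x)) :=
        (resTensorEquiv 𝒜 HS 𝒱 hVB).map_smul a _
      rw [h2]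
      rfl }

open CategoryTheory in
/-- Component of the adjunction identification, inverse direction. -/
noncomputable def piToRes (X : ModuleCat.{u} A)
    (F : G → (X ⟶ ModuleCat.of A V)) :
    X ⟶ ROb 𝒜 HS (ModuleCat.of B (V ⊗[K] (G → K))) :=
  letI : Module A (V ⊗[K] (G → K)) := Module.compHom _ HS.ι.toRingHom
  ModuleCat.ofHom <|
  { toFun := fun x => (resTensorEquiv 𝒜 HS 𝒱 hVB).symm (fun g => F g x)
    map_add' := fun x y => by
      show (resTensorEquiv 𝒜 HS 𝒱 hVB).symm (fun g => F g (x + y))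
        = (resTensorEquiv 𝒜 HS 𝒱 hVB).symm (fun g => F g x)
          + (resTensorEquiv 𝒜 HS 𝒱 hVB).symm (fun g => F g y)
      rw [show (fun g => F g (x + y)) = (fun g => F g x) + (fun g => F g y) from
        funext (fun g => map_add (F g).hom x y), map_add]
    map_smul' := fun a x => by
      dsimp only [RingHom.id_apply]
      show (resTensorEquiv 𝒜 HS 𝒱 hVB).symm (fun g => F g (a • x)) = _
      rw [show (fun g => F g (a • x)) = a • (fun g => F g x) from
        funext (fun g => map_smul (F g).hom a x)]
      exact (resTensorEquiv 𝒜 HS 𝒱 hVB).symm.map_smul a _ }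

open CategoryTheory ModuleCat in
/-- The `K`-linear adjunction identification
`Hom_B(F X, V ⊗ (KG)^*) ≃ (G → Hom_A(X, V))`. -/
noncomputable def homEquivPi (X : ModuleCat.{u} A) :
    (FOb 𝒜 HS hone hmul X ⟶ ModuleCat.of B (V ⊗[K] (G → K))) ≃ₗ[K]
      (G → (X ⟶ ModuleCat.of A V)) :=
  { toFun := resToPi 𝒜 HS hone hmul 𝒱 hVB X
    map_add' := fun φ₁ φ₂ => by
      funext g
      refine ModuleCat.hom_ext (DFunLike.ext _ _ fun x => ?_)
      show resTensorEquiv 𝒜 HS 𝒱 hVB ((φ₁ + φ₂) (fun _ => x)) g = _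
      rw [show (φ₁ + φ₂) (fun _ => x) = φ₁ (fun _ => x) + φ₂ (fun _ => x) from rfl, map_add]
      rfl
    map_smul' := fun k φ => by
      funext g
      refine ModuleCat.hom_ext (DFunLike.ext _ _ fun x => ?_)
      show resTensorEquiv 𝒜 HS 𝒱 hVB ((k • φ) (fun _ => x)) g = _
      rw [show (k • φ) (fun _ => x) = (algebraMap K B k) • φ (fun _ => x) from rfl]
      have h3 : (algebraMap K B k • (φ (fun _ => x)) : V ⊗[K] (G → K))
          = HS.ι (algebraMap K A k) • (φ (fun _ => x)) := by
        rw [AlgHom.commutes]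
      rw [h3]
      have h4 : resTensorEquiv 𝒜 HS 𝒱 hVB (HS.ι (algebraMap K A k) • φ (fun _ => x))
          = algebraMap K A k • resTensorEquiv 𝒜 HS 𝒱 hVB (φ (fun _ => x)) :=
        (resTensorEquiv 𝒜 HS 𝒱 hVB).map_smul (algebraMap K A k) _
      rw [h4]
      rfl
    invFun := fun F => adjInv 𝒜 HS hone hmul (piToRes 𝒜 HS 𝒱 hVB X F)
    left_inv := fun φ => by
      have h5 : piToRes 𝒜 HS 𝒱 hVB X (resToPi 𝒜 HS hone hmul 𝒱 hVB X φ)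
          = adjFun 𝒜 HS hone hmul φ := by
        refine ModuleCat.hom_ext (DFunLike.ext _ _ fun x => ?_)
        show (resTensorEquiv 𝒜 HS 𝒱 hVB).symm
          (fun g => resTensorEquiv 𝒜 HS 𝒱 hVB (φ (fun _ => x)) g) = φ (fun _ => x)
        exact (resTensorEquiv 𝒜 HS 𝒱 hVB).symm_apply_apply _
      show adjInv 𝒜 HS hone hmul (piToRes 𝒜 HS 𝒱 hVB X
        (resToPi 𝒜 HS hone hmul 𝒱 hVB X φ)) = φ
      rw [h5, adjInv_adjFun]
    right_inv := fun F => by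
      funext g
      refine ModuleCat.hom_ext (DFunLike.ext _ _ fun x => ?_)
      show resTensorEquiv 𝒜 HS 𝒱 hVB
        ((adjInv 𝒜 HS hone hmul (piToRes 𝒜 HS 𝒱 hVB X F)) (fun _ => x)) g = F g x
      have h6 := congrArg (fun ψ => ψ x)
        (adjFun_adjInv 𝒜 HS hone hmul (piToRes 𝒜 HS 𝒱 hVB X F))
      have h7 : (adjInv 𝒜 HS hone hmul (piToRes 𝒜 HS 𝒱 hVB X F)) (fun _ => x)
          = piToRes 𝒜 HS 𝒱 hVB X F x := h6
      rw [h7]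
      show resTensorEquiv 𝒜 HS 𝒱 hVB
        ((resTensorEquiv 𝒜 HS 𝒱 hVB).symm (fun g => F g x)) g = F g x
      rw [(resTensorEquiv 𝒜 HS 𝒱 hVB).apply_symm_apply]
  }

end tensorequiv

section resolution

open CategoryTheory

variable {B : Type u} [Ring B] [Algebra K B] (HS : IsSmashProduct K A G 𝒜 B)
variable (hone : (1 : A) ∈ 𝒜 1)
variable (hmul : ∀ (g h : G) (a b : A), a ∈ 𝒜 g → b ∈ 𝒜 h → a * b ∈ 𝒜 (g * h))
variable {MA : ModuleCat.{u} A} {MB : ModuleCat.{u} B}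

/-- Transfer of a projective resolution along the induction functor. -/
noncomputable def mkRes (P : ProjectiveResolution MA)
    (t : FOb 𝒜 HS hone hmul MA ⟶ MB) (ht : Function.Bijective t) :
    ProjectiveResolution MB := by
  have hexact0 : ∀ (y : P.complex.X 0), P.π.f 0 y = 0 → ∃ x, P.complex.d 1 0 x = y :=
    (ShortComplex.moduleCat_exact_iff _).1 P.exact₀
  have hsurj0 : Function.Surjective (P.π.f 0) :=
    (ModuleCat.epi_iff_surjective _).1 inferInstance
  have hexactn : ∀ (n : ℕ) (y : P.complex.X (n + 1)), P.complex.d (n + 1) n y = 0 →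
      ∃ x, P.complex.d (n + 2) (n + 1) x = y := fun n =>
    (ShortComplex.moduleCat_exact_iff _).1 (P.exact_succ n)
  -- the augmentation of the induced complex
  let π₀ : (FCplx 𝒜 HS hone hmul P.complex).X 0 ⟶ MB :=
    FMap 𝒜 HS hone hmul (P.π.f 0 : P.complex.X 0 ⟶ MA) ≫ t
  have w : (FCplx 𝒜 HS hone hmul P.complex).d 1 0 ≫ π₀ = 0 := by
    show (FMap 𝒜 HS hone hmul (P.complex.d 1 0) ≫ FMap 𝒜 HS hone hmul (P.π.f 0)) ≫ t = 0
    rw [← FMap_comp, P.complex_d_comp_π_f_zero, FMap_zero]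
    exact Limits.zero_comp
  refine
    { complex := FCplx 𝒜 HS hone hmul P.complex
      projective := fun n => ?_
      π := (ChainComplex.toSingle₀Equiv _ _).symm ⟨π₀, w⟩
      quasiIso := ⟨fun n => ?_⟩ }
  · haveI := P.projective n
    exact FOb_projective 𝒜 HS hone hmul (P.complex.X n)
  · match n with
    | 0 =>
      rw [ChainComplex.quasiIsoAt₀_iff, ShortComplex.quasiIso_iff_of_zeros']
      rotate_left
      · exact (FCplx 𝒜 HS hone hmul P.complex).shape 0 0 (by simp)
      · rfl
      · rfl
      constructor
      · rw [ShortComplex.moduleCat_exact_iff]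
        intro f hf
        have hf0 : π₀ f = 0 := by
          have : ((ChainComplex.toSingle₀Equiv _ _).symm
              ⟨π₀, w⟩ : _ ⟶ (ChainComplex.single₀ (ModuleCat.{u} B)).obj MB).f 0 f = 0 := hf
          rwa [ChainComplex.toSingle₀Equiv_symm_apply_f_zero] at this
        have hinj := ht.1
        have hf1 : FMap 𝒜 HS hone hmul (P.π.f 0 : P.complex.X 0 ⟶ MA) f = 0 := by
          apply hinj
          exact hf0.trans (map_zero (ConcreteCategory.hom t)).symm
        have hf2 : ∀ g : G, P.π.f 0 (f g) = 0 := fun g => congrFun hf1 g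
        choose x hx using fun g => hexact0 (f g) (hf2 g)
        exact ⟨x, funext hx⟩
      · rw [ModuleCat.epi_iff_surjective]
        intro z
        obtain ⟨y, hy⟩ := ht.2 z
        choose x hx using fun g => hsurj0 (y g)
        refine ⟨x, ?_⟩
        show ((ChainComplex.toSingle₀Equiv _ _).symm
            ⟨π₀, w⟩ : _ ⟶ (ChainComplex.single₀ (ModuleCat.{u} B)).obj MB).f 0 x = z
        rw [ChainComplex.toSingle₀Equiv_symm_apply_f_zero]
        show t (FMap 𝒜 HS hone hmul (P.π.f 0 : P.complex.X 0 ⟶ MA) x) = z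
        rw [show FMap 𝒜 HS hone hmul (P.π.f 0 : P.complex.X 0 ⟶ MA) x = y from funext hx, hy]
    | (n + 1) =>
      rw [quasiIsoAt_iff_exactAt' _ _ (ChainComplex.exactAt_succ_single_obj _ n)]
      rw [HomologicalComplex.exactAt_iff' _ (n + 2) (n + 1) n (by simp) (by simp)]
      rw [ShortComplex.moduleCat_exact_iff]
      intro f hf
      have hf2 : ∀ g : G, P.complex.d (n + 1) n (f g) = 0 := fun g => congrFun hf g
      choose x hx using fun g => hexactn n (f g) (hf2 g)
      exact ⟨x, funext hx⟩

end resolution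

end smash

section homologyPi

open CategoryTheory

variable {K : Type u} [Field K] {G : Type u} [Fintype G] [DecidableEq G]
variable (S T : ShortComplex (ModuleCat.{u} K))
variable (e₁ : T.X₁ ≃ₗ[K] (G → S.X₁)) (e₂ : T.X₂ ≃ₗ[K] (G → S.X₂))
  (e₃ : T.X₃ ≃ₗ[K] (G → S.X₃))
variable (hf : ∀ x g, e₂ (T.f x) g = S.f (e₁ x g)) (hg : ∀ x g, e₃ (T.g x) g = S.g (e₂ x g))

/-- Kernel of a `G`-fold product map. -/
noncomputable def kerEquivPi : LinearMap.ker T.g.hom ≃ₗ[K] (G → LinearMap.ker S.g.hom) where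
  toFun v g := ⟨e₂ v.1 g, by
    have h0 : T.g v.1 = 0 := v.2
    show S.g (e₂ v.1 g) = 0
    rw [← hg v.1 g, h0, map_zero]
    rfl⟩
  map_add' v w := by
    funext g
    apply Subtype.ext
    show e₂ (v.1 + w.1) g = e₂ v.1 g + e₂ w.1 g
    rw [map_add]
    rfl
  map_smul' c v := by
    funext g
    apply Subtype.ext
    show e₂ (c • v.1) g = c • e₂ v.1 g
    rw [map_smul]
    rfl
  invFun w := ⟨e₂.symm (fun g => (w g).1), by
    show T.g _ = 0
    apply e₃.injective
    rw [map_zero]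
    funext g
    rw [hg]
    rw [e₂.apply_symm_apply]
    exact (w g).2⟩
  left_inv v := by
    apply Subtype.ext
    show e₂.symm (fun g => e₂ v.1 g) = v.1
    exact e₂.symm_apply_apply v.1
  right_inv w := by
    funext g
    apply Subtype.ext
    show e₂ (e₂.symm fun g' => (w g').1) g = (w g).1
    rw [e₂.apply_symm_apply]

include e₁ hf in
lemma kerEquivPi_map_range :
    Submodule.map (kerEquivPi S T e₂ e₃ hg : LinearMap.ker T.g.hom →ₗ[K] (G → LinearMap.ker S.g.hom))
        (LinearMap.range T.moduleCatToCycles)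
      = Submodule.pi Set.univ (fun _ : G => LinearMap.range S.moduleCatToCycles) := by
  ext w
  simp only [Submodule.mem_map, LinearMap.mem_range, Submodule.mem_pi, Set.mem_univ,
    forall_true_left]
  constructor
  · rintro ⟨v, ⟨x, hx⟩, rfl⟩ g
    refine ⟨e₁ x g, ?_⟩
    apply Subtype.ext
    show S.f (e₁ x g) = _
    rw [← hf x g]
    subst hx
    rfl
  · intro hw
    choose y hy using hw
    refine ⟨T.moduleCatToCycles (e₁.symm y), ⟨_, rfl⟩, ?_⟩
    funext g
    apply Subtype.ext
    show e₂ (T.f (e₁.symm y)) g = (w g).1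
    rw [hf, e₁.apply_symm_apply]
    have := congrArg Subtype.val (hy g)
    exact this

/-- The concrete homology of a `G`-fold product of short complexes of modules. -/
noncomputable def homologyPiEquivAux :
    (T.moduleCatLeftHomologyData.H : Type u) ≃ₗ[K] (G → S.moduleCatLeftHomologyData.H) :=
  (Submodule.Quotient.equiv _ _ (kerEquivPi S T e₂ e₃ hg)
      (kerEquivPi_map_range S T e₁ e₂ e₃ hf hg)).trans
    (Submodule.quotientPi _)

/-- Homology of a complex which is a `G`-fold product. -/
noncomputable def cplxHomologyPiEquiv (Cc Dc : CochainComplex (ModuleCat.{u} K) ℕ) (i : ℕ)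
    (e : ∀ n, (Cc.X n : Type u) ≃ₗ[K] (G → Dc.X n))
    (hcomm : ∀ n m (x : Cc.X n) (g : G), e m (Cc.d n m x) g = Dc.d n m (e n x g)) :
    (Cc.homology i : Type u) ≃ₗ[K] (G → Dc.homology i) :=
  ((Cc.sc i).moduleCatHomologyIso.toLinearEquiv).trans <|
    (homologyPiEquivAux (Dc.sc i) (Cc.sc i)
      (e ((ComplexShape.up ℕ).prev i)) (e i) (e ((ComplexShape.up ℕ).next i))
      (fun x g => hcomm _ _ x g) (fun x g => hcomm _ _ x g)).trans <|
    LinearEquiv.piCongrRight (fun _ => (Dc.sc i).moduleCatHomologyIso.symm.toLinearEquiv)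

end homologyPi

section dummy


open TensorProduct Opposite

theorem stmt16 (K : Type u) [Field K] (A : Type u) [Ring A] [Algebra K A]
    (G : Type u) [Group G] [Fintype G] [DecidableEq G]
    (𝒜 : G → Submodule K A) [DirectSum.Decomposition 𝒜]
    (hone : (1 : A) ∈ 𝒜 1)
    (hmul : ∀ (g h : G) (a b : A), a ∈ 𝒜 g → b ∈ 𝒜 h → a * b ∈ 𝒜 (g * h))
    (B : Type u) [Ring B] [Algebra K B]
    (HS : IsSmashProduct K A G 𝒜 B)
    -- M : a graded A-module
    (M : Type u) [AddCommGroup M] [Module A M] [Module K M]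
    (ℳ : G → Submodule K M) [DirectSum.Decomposition ℳ]
    (hM : ∀ (g h : G) (a : A) (m : M), a ∈ 𝒜 g → m ∈ ℳ h → a • m ∈ ℳ (g * h))
    -- M admits a resolution by finitely generated graded projective A-modules
    (hres : ∃ (Pc : ChainComplex (ModuleCat.{u} A) ℕ)
      (π : Pc ⟶ (ChainComplex.single₀ (ModuleCat.{u} A)).obj (ModuleCat.of A M)),
        (∀ n, CategoryTheory.Projective (Pc.X n) ∧ Module.Finite A (Pc.X n) ∧
          ∃ ℊ : G → AddSubgroup (Pc.X n), Nonempty (DirectSum.Decomposition ℊ) ∧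
            ∀ (g h : G) (a : A) (x : Pc.X n), a ∈ 𝒜 g → x ∈ ℊ h → a • x ∈ ℊ (g * h)) ∧
          QuasiIso π)
    -- N : a graded A-module
    (N : Type u) [AddCommGroup N] [Module A N] [Module K N]
    (𝒩 : G → Submodule K N) [DirectSum.Decomposition 𝒩]
    (hN : ∀ (g h : G) (a : A) (n : N), a ∈ 𝒜 g → n ∈ 𝒩 h → a • n ∈ 𝒩 (g * h))
    -- the A # G^*-module structures on M ⊗_K (KG)^* and N ⊗_K (KG)^*
    [Module B (M ⊗[K] (G → K))]
    (hMB : ∀ (a : A) (g : G) (m : M) (h : G),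
      (HS.ι a * HS.u g) • (m ⊗ₜ[K] (Pi.single h (1 : K) : G → K)) =
        (a • ((DirectSum.decompose ℳ m (g * h⁻¹) : ℳ (g * h⁻¹)) : M)) ⊗ₜ[K]
          (Pi.single h (1 : K) : G → K))
    [Module B (N ⊗[K] (G → K))]
    (hNB : ∀ (a : A) (g : G) (n : N) (h : G),
      (HS.ι a * HS.u g) • (n ⊗ₜ[K] (Pi.single h (1 : K) : G → K)) =
        (a • ((DirectSum.decompose 𝒩 n (g * h⁻¹) : 𝒩 (g * h⁻¹)) : N)) ⊗ₜ[K]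
          (Pi.single h (1 : K) : G → K))
    (i : ℕ) :
    Nonempty
      (((((_root_.Ext K (ModuleCat.{u} A) i).obj (op (ModuleCat.of A M))).obj
            (ModuleCat.of A N) : Type u) ⊗[K] (G → K)) ≃ₗ[K]
        ((((_root_.Ext K (ModuleCat.{u} B) i).obj
            (op (ModuleCat.of B (M ⊗[K] (G → K))))).obj
            (ModuleCat.of B (N ⊗[K] (G → K))) : Type u))) := by
  classical
  let MA := ModuleCat.of A M
  let NA := ModuleCat.of A N
  let MBc := ModuleCat.of B (M ⊗[K] (G → K))
  let Yc := ModuleCat.of B (N ⊗[K] (G → K))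
  let P : CategoryTheory.ProjectiveResolution MA := CategoryTheory.ProjectiveResolution.of MA
  letI : Module B (G → M) := smashModule 𝒜 HS hone hmul
  let t : FOb 𝒜 HS hone hmul MA ⟶ MBc :=
    ModuleCat.ofHom (smashTensorEquiv 𝒜 HS hone hmul ℳ hM hMB).toLinearMap
  have ht : Function.Bijective t := by
    exact (smashTensorEquiv 𝒜 HS hone hmul ℳ hM hMB).bijective
  let Q : CategoryTheory.ProjectiveResolution MBc := mkRes 𝒜 HS hone hmul P t ht
  let extA := ((P.isoExt i NA :
    _ ≅ (P.complex.linearYonedaObj K NA).homology i)).toLinearEquiv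
  let extB := ((Q.isoExt i Yc :
    _ ≅ (Q.complex.linearYonedaObj K Yc).homology i)).toLinearEquiv
  let central := cplxHomologyPiEquiv (Q.complex.linearYonedaObj K Yc)
      (P.complex.linearYonedaObj K NA) i
      (fun n => homEquivPi 𝒜 HS hone hmul 𝒩 hNB (P.complex.X n))
      (fun n m x g => rfl)
  let tens := TensorProduct.piScalarRight K K
    ((((_root_.Ext K (ModuleCat.{u} A) i).obj (op (ModuleCat.of A M))).obj
      (ModuleCat.of A N) : Type u)) G
  exact ⟨tens.trans ((LinearEquiv.piCongrRight (fun _ : G => extA)).trans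
    (central.symm.trans extB.symm))⟩
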